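/- Let A be a commutative ring, X a set, G a group of permutations of X, and ≤ a term ordering of X^⋄. Let I be a G-invariant ideal of R = A[X] and B a set of nonzero elements of I that is a Gröbner basis for I, i.e. lt(I) = lt(B). Then I equals the ideal of R generated by {σg : σ ∈ G, g ∈ B}. -/

import Mathlib

/-- A quasi-ordering (here: any binary relation) `r` on `S` is a well-quasi-ordering if
every infinite sequence is good, i.e. there are `i < j` with `r (f i) (f j)`. -/
def IsWQO {S : Type*} (r : S → S → Prop) : Prop :=
  ∀ f : ℕ → S, ∃ i j : ℕ, i < j ∧ r (f i) (f j)

/-- A term ordering of the monoid of monomials `X →₀ ℕ`: a linear order which is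
well-founded, with `1 ≤ x` for every indeterminate `x`, and compatible with
multiplication by indeterminates. -/
def IsTermOrder {X : Type*} (r : (X →₀ ℕ) → (X →₀ ℕ) → Prop) : Prop :=
  IsLinearOrder (X →₀ ℕ) r ∧
  WellFounded (fun v w : X →₀ ℕ => r v w ∧ v ≠ w) ∧
  (∀ x : X, r 0 (Finsupp.single x 1)) ∧
  (∀ (v w : X →₀ ℕ) (x : X), r v w → r (Finsupp.single x 1 + v) (Finsupp.single x 1 + w))

/-- The symmetric cancellation ordering corresponding to a permutation group `G` on `X`
and a term ordering `r` of the monomials `X →₀ ℕ`:  `v ⪯ w` iff `r v w` and there are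
`σ ∈ G` and a monomial `u` with `w = u·σv` and `u·σv' ≤ w` for every `v' ≤ v`. -/
def SymCancel {X : Type*} (G : Subgroup (Equiv.Perm X))
    (r : (X →₀ ℕ) → (X →₀ ℕ) → Prop) (v w : X →₀ ℕ) : Prop :=
  r v w ∧ ∃ σ : Equiv.Perm X, σ ∈ G ∧ ∃ u : X →₀ ℕ,
    w = u + Finsupp.mapDomain (⇑σ) v ∧
    ∀ v' : X →₀ ℕ, r v' v → r (u + Finsupp.mapDomain (⇑σ) v') w

/-- The lexicographic ordering of monomials induced by a linear order on `X`:
`v ≤lex w` iff `v = w` or there is `x` with `v x < w x` and `v y = w y` for all `y > x`. -/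
def LexLe {X : Type*} [LinearOrder X] (v w : X →₀ ℕ) : Prop :=
  v = w ∨ ∃ x : X, v x < w x ∧ ∀ y : X, x < y → v y = w y

/-- `ltSpan r prec B`: the `A`-submodule of `A[X]` generated by all monomial terms
`lc(g)·w` where `g ∈ B` is nonzero with leading monomial `v = lm g` (w.r.t. the term
ordering `r`) and `w` is a monomial with `v ⪯ w` (w.r.t. `prec`).  For `prec` the
symmetric cancellation ordering this is the module `lt(B)` of the paper. -/
noncomputable def ltSpan {A : Type*} [CommRing A] {X : Type*}
    (r prec : (X →₀ ℕ) → (X →₀ ℕ) → Prop)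
    (B : Set (MvPolynomial X A)) : Submodule A (MvPolynomial X A) :=
  Submodule.span A {p : MvPolynomial X A | ∃ g ∈ B, ∃ v ∈ g.support,
    (∀ m ∈ g.support, r m v) ∧ ∃ w : X →₀ ℕ, prec v w ∧
      p = MvPolynomial.monomial w (MvPolynomial.coeff v g)}

/-- Let `I` be a `G`-invariant ideal of `A[X]` (`A` a commutative
ring) and `B` a set of nonzero elements of `I` which is a Gröbner basis for `I`, i.e.
`lt(I) = lt(B)`.  Then `I` is the ideal of `A[X]` generated by `{σg : σ ∈ G, g ∈ B}`. -/
theorem stmt13 {A : Type*} [CommRing A] {X : Type*}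
    (G : Subgroup (Equiv.Perm X)) (r : (X →₀ ℕ) → (X →₀ ℕ) → Prop)
    (hr : IsTermOrder r)
    (I : Ideal (MvPolynomial X A))
    (hI : ∀ σ ∈ G, ∀ f ∈ I, MvPolynomial.rename (⇑σ) f ∈ I)
    (B : Set (MvPolynomial X A)) (hBI : B ⊆ (I : Set (MvPolynomial X A)))
    (hB0 : ∀ g ∈ B, g ≠ 0)
    (hGB : ltSpan r (SymCancel G r) (I : Set (MvPolynomial X A)) =
      ltSpan r (SymCancel G r) B) :
    I = Ideal.span {p : MvPolynomial X A |
      ∃ σ ∈ G, ∃ g ∈ B, p = MvPolynomial.rename (⇑σ) g} := by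
  classical
  set J := Ideal.span {p : MvPolynomial X A |
      ∃ σ ∈ G, ∃ g ∈ B, p = MvPolynomial.rename (⇑σ) g} with hJdef
  have hJI : J ≤ I := by
    rw [hJdef, Ideal.span_le]
    rintro p ⟨σ, hσ, g, hg, rfl⟩
    exact hI σ hσ g (hBI hg)
  haveI hlin : IsLinearOrder _ r := hr.1
  -- existence of maxima
  have hmax : ∀ s : Finset (X →₀ ℕ), s.Nonempty → ∃ v ∈ s, ∀ m ∈ s, r m v := by
    intro s hs
    induction s using Finset.induction_on with
    | empty => simp at hs
    | @insert a s ha IH =>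
      rcases s.eq_empty_or_nonempty with rfl | hs'
      · refine ⟨a, by simp, ?_⟩
        intro m hm
        rw [Finset.mem_insert] at hm
        rcases hm with rfl | hm
        · exact refl_of r m
        · simp at hm
      · obtain ⟨v, hv, hvmax⟩ := IH hs'
        rcases total_of r a v with h | h
        · refine ⟨v, Finset.mem_insert_of_mem hv, ?_⟩
          intro m hm
          rcases Finset.mem_insert.1 hm with rfl | hm
          · exact h
          · exact hvmax m hm
        · refine ⟨a, Finset.mem_insert_self a s, ?_⟩
          intro m hm
          rcases Finset.mem_insert.1 hm with rfl | hm
          · exact refl_of r m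
          · exact trans_of r (hvmax m hm) h
  have key : ∀ v : (X →₀ ℕ), ∀ f ∈ I, (∀ m ∈ f.support, r m v) → f ∈ J := by
    intro v
    induction v using (hr.2.1).induction with
    | _ v IH =>
    intro f hf hsupp
    by_cases hf0 : f = 0
    · simp [hf0]
    obtain ⟨w, hw, hwmax⟩ := hmax f.support (MvPolynomial.support_nonempty.2 hf0)
    by_cases hwv : w = v
    swap
    · exact IH w ⟨hsupp w hw, hwv⟩ f hf hwmax
    subst hwv
    -- leading term of f is in lt(I) = lt(B)
    have hlt : (MvPolynomial.monomial w (MvPolynomial.coeff w f) : MvPolynomial X A)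
        ∈ ltSpan r (SymCancel G r) B := by
      rw [← hGB]
      apply Submodule.subset_span
      refine ⟨f, hf, w, hw, hwmax, w, ?_, rfl⟩
      refine ⟨refl_of r w, 1, G.one_mem, 0, by simp [Finsupp.mapDomain_id], ?_⟩
      intro v' hv'
      simpa [Finsupp.mapDomain_id] using hv'
    unfold ltSpan at hlt
    obtain ⟨n, a, x, hx⟩ := Submodule.mem_span_set'.1 hlt
    have hxp := fun i => (x i).2
    simp only [Set.mem_setOf_eq] at hxp
    choose g hgB vv hvmem hvmax w' hprec hxeq using hxp
    have hrw : ∀ i, r (vv i) (w' i) := fun i => (hprec i).1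
    choose σ hσG u hw' hbound using fun i => (hprec i).2
    set T : Finset (Fin n) := Finset.univ.filter (fun i => w' i = w) with hTdef
    set F : MvPolynomial X A :=
      ∑ i ∈ T, a i • (MvPolynomial.monomial (u i) 1 * MvPolynomial.rename (⇑(σ i)) (g i))
      with hFdef
    have hFJ : F ∈ J := by
      refine Submodule.sum_mem _ fun i _ => ?_
      rw [MvPolynomial.smul_eq_C_mul]
      exact Ideal.mul_mem_left _ _ (Ideal.mul_mem_left _ _
        (Ideal.subset_span ⟨σ i, hσG i, g i, hgB i, rfl⟩))
    have hcoeffF : MvPolynomial.coeff w F = MvPolynomial.coeff w f := by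
      have h1 : MvPolynomial.coeff w f = ∑ i, a i * MvPolynomial.coeff w (x i : MvPolynomial X A) := by
        have h2 := congrArg (MvPolynomial.coeff w) hx
        simp only [MvPolynomial.coeff_sum, MvPolynomial.coeff_smul, smul_eq_mul,
          MvPolynomial.coeff_monomial, if_pos rfl] at h2
        exact h2.symm
      rw [h1, hFdef, MvPolynomial.coeff_sum,
        ← Finset.sum_subset (Finset.subset_univ T)
          (fun i _ hi => by
            have hiw : w' i ≠ w := by simpa [hTdef] using hi
            rw [hxeq i, MvPolynomial.coeff_monomial, if_neg hiw, mul_zero])]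
      apply Finset.sum_congr rfl
      intro i hi
      have hiw : w' i = w := by simpa [hTdef] using hi
      rw [MvPolynomial.coeff_smul, smul_eq_mul, hxeq i, MvPolynomial.coeff_monomial,
        if_pos hiw]
      congr 1
      conv_lhs => rw [← hiw, hw' i]
      rw [MvPolynomial.coeff_monomial_mul, one_mul,
        MvPolynomial.coeff_rename_mapDomain _ (σ i).injective]
    have hsuppF : ∀ m ∈ F.support, r m w := by
      intro m hm
      rw [MvPolynomial.mem_support_iff] at hm
      obtain ⟨i, hiT, hi0⟩ : ∃ i ∈ T, MvPolynomial.coeff m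
          (a i • (MvPolynomial.monomial (u i) 1 * MvPolynomial.rename (⇑(σ i)) (g i))) ≠ 0 := by
        by_contra hcon
        push_neg at hcon
        exact hm (by rw [hFdef, MvPolynomial.coeff_sum]; exact Finset.sum_eq_zero hcon)
      rw [MvPolynomial.coeff_smul, smul_eq_mul] at hi0
      have hi1 : MvPolynomial.coeff m
          (MvPolynomial.monomial (u i) 1 * MvPolynomial.rename (⇑(σ i)) (g i)) ≠ 0 :=
        fun h => hi0 (by rw [h, mul_zero])
      rw [MvPolynomial.coeff_monomial_mul'] at hi1
      split_ifs at hi1 with hle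
      · rw [one_mul] at hi1
        obtain ⟨m', hm', hc⟩ := MvPolynomial.coeff_rename_ne_zero _ _ _ hi1
        have hmeq : m = u i + Finsupp.mapDomain (⇑(σ i)) m' := by
          rw [hm', add_tsub_cancel_of_le hle]
        have hiw : w' i = w := by simpa [hTdef] using hiT
        rw [hmeq, ← hiw]
        exact hbound i m' (hvmax i m' (MvPolynomial.mem_support_iff.2 hc))
      · exact absurd rfl hi1
    set h : MvPolynomial X A := f - F with hhdef
    have hhI : h ∈ I := I.sub_mem hf (hJI hFJ)
    have hhw : MvPolynomial.coeff w h = 0 := by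
      rw [hhdef, MvPolynomial.coeff_sub, hcoeffF, sub_self]
    have hsupph : ∀ m ∈ h.support, r m w ∧ m ≠ w := by
      intro m hm
      constructor
      · rw [MvPolynomial.mem_support_iff, hhdef, MvPolynomial.coeff_sub] at hm
        by_cases hmf : MvPolynomial.coeff m f ≠ 0
        · exact hwmax m (MvPolynomial.mem_support_iff.2 hmf)
        · push_neg at hmf
          rw [hmf, zero_sub, neg_ne_zero] at hm
          exact hsuppF m (MvPolynomial.mem_support_iff.2 hm)
      · rintro rfl
        exact (MvPolynomial.mem_support_iff.1 hm) hhw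
    by_cases hh0 : h = 0
    · have hfF : f = F := by rwa [← sub_eq_zero]
      rw [hfF]; exact hFJ
    · obtain ⟨w2, hw2, hw2max⟩ := hmax h.support (MvPolynomial.support_nonempty.2 hh0)
      have hhJ : h ∈ J := IH w2 (hsupph w2 hw2) h hhI hw2max
      have hfhF : f = h + F := by rw [hhdef]; ring
      rw [hfhF]; exact J.add_mem hhJ hFJ
  refine le_antisymm ?_ hJI
  intro f hf
  by_cases hf0 : f = 0
  · rw [hf0]; exact J.zero_mem
  · obtain ⟨w, hw, hwmax⟩ := hmax f.support (MvPolynomial.support_nonempty.2 hf0)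
    exact key w f hf hwmax
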